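/- arXiv:2411.03393 — 4 statements merged into one kernel-verified Lean document; each statement's English description precedes it below -/
import Mathlib

section
/- Let Σ be a δ-approximately (d_X, d_Y)-biregular bipartite graph with parts X and Y, where d_Y ≤ d_X. Suppose (F,S) ∈ 2^Y × 2^X is a (ψ_X, ψ_Y)-approximating pair for a set A ⊆ X with |[A]| = a and |N(A)| = g, where F ⊆ N(A). Then, writing s = |S| and f = |F|, we have s·d_X ≤ f·d_Y + (g-f)·ψ_Y + (s-a)·ψ_X; in particular s ≤ f + (1/d_X)·[(g-f)·ψ_Y + (s-a)·ψ_X]. -/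
open Finset

/-- The neighbourhood `N(A)` of a set of vertices. -/
def nbhd {V : Type*} [Fintype V] [DecidableEq V] (G : SimpleGraph V)
    [DecidableRel G.Adj] (A : Finset V) : Finset V :=
  A.biUnion fun x => G.neighborFinset x

/-- The closure `[A] = {x ∈ X : N(x) ⊆ N(A)}`. -/
def closure' {V : Type*} [Fintype V] [DecidableEq V] (G : SimpleGraph V)
    [DecidableRel G.Adj] (X A : Finset V) : Finset V :=
  X.filter fun x => G.neighborFinset x ⊆ nbhd G A

/-- Double counting of edges between two vertex sets. -/
lemma double_count {V : Type*} [Fintype V] [DecidableEq V] (G : SimpleGraph V)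
    [DecidableRel G.Adj] (P Q : Finset V) :
    ∑ u ∈ P, (G.neighborFinset u ∩ Q).card =
      ∑ v ∈ Q, (G.neighborFinset v ∩ P).card := by
  have h : ∀ (P Q : Finset V) (u : V),
      (G.neighborFinset u ∩ Q).card = ∑ v ∈ Q, if G.Adj u v then 1 else 0 := by
    intro P Q u
    rw [inter_comm, ← filter_mem_eq_inter, card_filter]
    simp [SimpleGraph.mem_neighborFinset]
  calc ∑ u ∈ P, (G.neighborFinset u ∩ Q).card
      = ∑ u ∈ P, ∑ v ∈ Q, if G.Adj u v then 1 else 0 := by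
        exact sum_congr rfl fun u _ => h P Q u
    _ = ∑ v ∈ Q, ∑ u ∈ P, if G.Adj u v then 1 else 0 := sum_comm
    _ = ∑ v ∈ Q, (G.neighborFinset v ∩ P).card := by
        refine sum_congr rfl fun v _ => ?_
        rw [h Q P v]
        refine sum_congr rfl fun u _ => ?_
        simp [G.adj_comm]

/-- If `(F,S)` is a `(ψ_X, ψ_Y)`-approximating pair for `A ⊆ X` in a
`δ`-approximately `(d_X,d_Y)`-biregular bipartite graph `Σ = X ⊔ Y`, then with
`s = |S|`, `f = |F|`, `a = |[A]|`, `g = |N(A)|`, we have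
`s·d_X ≤ f·d_Y + (g-f)·ψ_Y + (s-a)·ψ_X`, and in particular
`s ≤ f + (1/d_X)·[(g-f)·ψ_Y + (s-a)·ψ_X]`. -/
theorem stmt_3 {V : Type*} [Fintype V] [DecidableEq V] (G : SimpleGraph V)
    [DecidableRel G.Adj] (X Y : Finset V) (δ dX dY ψX ψY : ℝ)
    (hδ : 1 ≤ δ) (hdX : 0 < dX) (hdYX : dY ≤ dX)
    (hdisj : Disjoint X Y) (hcover : ∀ v : V, v ∈ X ∨ v ∈ Y)
    (hbip : ∀ u v : V, G.Adj u v → (u ∈ X ∧ v ∈ Y) ∨ (u ∈ Y ∧ v ∈ X))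
    (hdegX : ∀ x ∈ X, dX ≤ (G.degree x : ℝ) ∧ (G.degree x : ℝ) ≤ δ * dX)
    (hdegY : ∀ y ∈ Y, δ⁻¹ * dY ≤ (G.degree y : ℝ) ∧ (G.degree y : ℝ) ≤ dY)
    (A F S : Finset V) (hA : A ⊆ X) (hFY : F ⊆ Y) (hSX : S ⊆ X)
    (a g s f : ℕ)
    (ha : (closure' G X A).card = a) (hg : (nbhd G A).card = g)
    (hs : S.card = s) (hf : F.card = f)
    (hFN : F ⊆ nbhd G A) (hScl : closure' G X A ⊆ S)
    (hSdeg : ∀ u ∈ S, (G.degree u : ℝ) - ψX ≤ ((G.neighborFinset u ∩ F).card : ℝ))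
    (hFdeg : ∀ v ∈ Y \ F,
      (G.degree v : ℝ) - ψY ≤ ((G.neighborFinset v ∩ (X \ S)).card : ℝ)) :
    (s : ℝ) * dX ≤ (f : ℝ) * dY + ((g : ℝ) - f) * ψY + ((s : ℝ) - a) * ψX ∧
      (s : ℝ) ≤ (f : ℝ) + (1 / dX) * (((g : ℝ) - f) * ψY + ((s : ℝ) - a) * ψX) := by
  classical
  set C := closure' G X A with hCdef
  set NA := nbhd G A with hNAdef
  -- N(A) ⊆ Y
  have hNAY : NA ⊆ Y := by
    intro v hv
    simp only [hNAdef, nbhd, mem_biUnion] at hv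
    obtain ⟨x, hxA, hxv⟩ := hv
    rw [SimpleGraph.mem_neighborFinset] at hxv
    rcases hbip x v hxv with ⟨_, hvY⟩ | ⟨hxY, _⟩
    · exact hvY
    · exact absurd hxY (Finset.disjoint_left.mp hdisj (hA hxA))
  have haS : a ≤ s := by rw [← ha, ← hs]; exact card_le_card hScl
  -- Step 1: for v ∈ Y \ F, |N(v) ∩ S| ≤ ψY
  have step1 : ∀ v ∈ Y \ F, ((G.neighborFinset v ∩ S).card : ℝ) ≤ ψY := by
    intro v hv
    have h := hFdeg v hv
    have hvY := (mem_sdiff.mp hv).1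
    have hdisj2 : Disjoint (G.neighborFinset v ∩ S) (G.neighborFinset v ∩ (X \ S)) := by
      apply Finset.disjoint_left.mpr
      intro x hx1 hx2
      exact (mem_sdiff.mp (mem_inter.mp hx2).2).2 (mem_inter.mp hx1).2
    have hsub : (G.neighborFinset v ∩ S) ∪ (G.neighborFinset v ∩ (X \ S)) ⊆
        G.neighborFinset v := by
      apply union_subset <;> exact inter_subset_left
    have hcard : (G.neighborFinset v ∩ S).card + (G.neighborFinset v ∩ (X \ S)).card
        ≤ G.degree v := by
      rw [← card_union_of_disjoint hdisj2, ← SimpleGraph.card_neighborFinset_eq_degree]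
      exact card_le_card hsub
    have := (Nat.cast_le (α := ℝ)).mpr hcard
    push_cast at this
    linarith
  -- Step 2: e(S,F) ≤ f * dY
  have step2 : (∑ u ∈ S, ((G.neighborFinset u ∩ F).card : ℝ)) ≤ (f : ℝ) * dY := by
    have hdc := double_count G S F
    have : (∑ u ∈ S, ((G.neighborFinset u ∩ F).card : ℝ))
        = ∑ v ∈ F, ((G.neighborFinset v ∩ S).card : ℝ) := by
      push_cast [← Nat.cast_sum]
      exact_mod_cast congrArg (Nat.cast : ℕ → ℝ) hdc
    rw [this]
    calc ∑ v ∈ F, ((G.neighborFinset v ∩ S).card : ℝ)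
        ≤ ∑ v ∈ F, dY := by
          refine sum_le_sum fun v hv => ?_
          have h1 : (G.neighborFinset v ∩ S).card ≤ G.degree v := by
            rw [← SimpleGraph.card_neighborFinset_eq_degree]
            exact card_le_card inter_subset_left
          have h2 := (hdegY v (hFY hv)).2
          have := (Nat.cast_le (α := ℝ)).mpr h1
          linarith
      _ = (f : ℝ) * dY := by rw [sum_const, ← hf]; push_cast; ring
  -- Step 3: ∑_{u ∈ C} |N(u) ∩ (NA \ F)| ≤ (g - f) * ψY
  have hgf : (NA \ F).card = g - f := by
    rw [card_sdiff_of_subset hFN, hg, hf]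
  have hfg : f ≤ g := by rw [← hg, ← hf]; exact card_le_card hFN
  have step3 : (∑ u ∈ C, ((G.neighborFinset u ∩ (NA \ F)).card : ℝ))
      ≤ ((g : ℝ) - f) * ψY := by
    have hdc := double_count G C (NA \ F)
    have heq : (∑ u ∈ C, ((G.neighborFinset u ∩ (NA \ F)).card : ℝ))
        = ∑ v ∈ NA \ F, ((G.neighborFinset v ∩ C).card : ℝ) := by
      exact_mod_cast congrArg (Nat.cast : ℕ → ℝ) hdc
    rw [heq]
    calc ∑ v ∈ NA \ F, ((G.neighborFinset v ∩ C).card : ℝ)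
        ≤ ∑ v ∈ NA \ F, ψY := by
          refine sum_le_sum fun v hv => ?_
          have hvYF : v ∈ Y \ F := by
            rw [mem_sdiff] at hv ⊢
            exact ⟨hNAY hv.1, hv.2⟩
          have h1 : (G.neighborFinset v ∩ C).card ≤ (G.neighborFinset v ∩ S).card :=
            card_le_card (inter_subset_inter Subset.rfl hScl)
          have := step1 v hvYF
          have h1' := (Nat.cast_le (α := ℝ)).mpr h1
          linarith
      _ = ((g : ℝ) - f) * ψY := by
          rw [sum_const, hgf, nsmul_eq_mul, Nat.cast_sub hfg]
  -- Step 4: degree bounds on S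
  have step4 : (∑ u ∈ S, (G.degree u : ℝ))
      ≤ (∑ u ∈ S, ((G.neighborFinset u ∩ F).card : ℝ))
        + (∑ u ∈ C, ((G.neighborFinset u ∩ (NA \ F)).card : ℝ))
        + ((s : ℝ) - a) * ψX := by
    have hsplit : ∀ (h : V → ℝ), (∑ u ∈ S \ C, h u) + (∑ u ∈ C, h u) = ∑ u ∈ S, h u :=
      fun h => sum_sdiff hScl
    rw [← hsplit (fun u => (G.degree u : ℝ)),
        ← hsplit (fun u => ((G.neighborFinset u ∩ F).card : ℝ))]
    have hC : ∀ u ∈ C, (G.degree u : ℝ) ≤ ((G.neighborFinset u ∩ F).card : ℝ)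
        + ((G.neighborFinset u ∩ (NA \ F)).card : ℝ) := by
      intro u hu
      have hNu : G.neighborFinset u ⊆ NA := (mem_filter.mp hu).2
      have hsub : G.neighborFinset u ⊆
          (G.neighborFinset u ∩ F) ∪ (G.neighborFinset u ∩ (NA \ F)) := by
        intro v hv
        rcases em (v ∈ F) with h | h
        · exact mem_union_left _ (mem_inter.mpr ⟨hv, h⟩)
        · exact mem_union_right _ (mem_inter.mpr ⟨hv, mem_sdiff.mpr ⟨hNu hv, h⟩⟩)
      have : G.degree u ≤ (G.neighborFinset u ∩ F).card
          + (G.neighborFinset u ∩ (NA \ F)).card := by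
        rw [← SimpleGraph.card_neighborFinset_eq_degree]
        exact (card_le_card hsub).trans (card_union_le _ _)
      exact_mod_cast this
    have hSC : ∀ u ∈ S \ C, (G.degree u : ℝ) ≤ ((G.neighborFinset u ∩ F).card : ℝ) + ψX := by
      intro u hu
      have := hSdeg u (mem_sdiff.mp hu).1
      linarith
    have hcardSC : ((S \ C).card : ℝ) = (s : ℝ) - a := by
      rw [card_sdiff_of_subset hScl, hs, ha]; push_cast [haS]; ring
    have h1 : (∑ u ∈ S \ C, (G.degree u : ℝ))
        ≤ (∑ u ∈ S \ C, ((G.neighborFinset u ∩ F).card : ℝ)) + ((s : ℝ) - a) * ψX := by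
      calc (∑ u ∈ S \ C, (G.degree u : ℝ))
          ≤ ∑ u ∈ S \ C, (((G.neighborFinset u ∩ F).card : ℝ) + ψX) :=
            sum_le_sum hSC
        _ = (∑ u ∈ S \ C, ((G.neighborFinset u ∩ F).card : ℝ)) + ((s : ℝ) - a) * ψX := by
            rw [sum_add_distrib, sum_const, ← hcardSC]; push_cast; ring
    have h2 : (∑ u ∈ C, (G.degree u : ℝ))
        ≤ (∑ u ∈ C, ((G.neighborFinset u ∩ F).card : ℝ))
          + (∑ u ∈ C, ((G.neighborFinset u ∩ (NA \ F)).card : ℝ)) := by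
      rw [← sum_add_distrib]
      exact sum_le_sum hC
    linarith
  -- combine
  have hmain : (s : ℝ) * dX ≤ (f : ℝ) * dY + ((g : ℝ) - f) * ψY + ((s : ℝ) - a) * ψX := by
    have hlow : (s : ℝ) * dX ≤ ∑ u ∈ S, (G.degree u : ℝ) := by
      calc (s : ℝ) * dX = ∑ _u ∈ S, dX := by rw [sum_const, hs]; push_cast; ring
        _ ≤ ∑ u ∈ S, (G.degree u : ℝ) :=
            sum_le_sum fun u hu => (hdegX u (hSX hu)).1
    linarith
  refine ⟨hmain, ?_⟩
  have hfs : (0 : ℝ) ≤ (f : ℝ) := Nat.cast_nonneg f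
  have h2 : (s : ℝ) - f ≤ (((g : ℝ) - f) * ψY + ((s : ℝ) - a) * ψX) / dX := by
    rw [le_div_iff₀ hdX]
    nlinarith
  have h3 : (1 / dX) * (((g : ℝ) - f) * ψY + ((s : ℝ) - a) * ψX)
      = (((g : ℝ) - f) * ψY + ((s : ℝ) - a) * ψX) / dX := by ring
  linarith
end

section
/- Lovász–Stein covering lemma: Let G be a finite bipartite graph with parts P and Q such that every vertex in P has degree at least a > 0 and every vertex in Q has degree at most b ≥ 1. Then there exists Q' ⊆ Q covering P (i.e., every vertex of P has a neighbour in Q') with |Q'| ≤ (|Q|/a)·(1 + log b). -/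
open Finset

/-- Real-valued harmonic number. -/
noncomputable def steinH (n : ℕ) : ℝ := ∑ i ∈ Finset.range n, ((i : ℝ) + 1)⁻¹

lemma steinH_eq (n : ℕ) : steinH n = (harmonic n : ℝ) := by
  unfold steinH harmonic
  push_cast
  rfl

lemma steinH_nonneg (n : ℕ) : 0 ≤ steinH n := by
  unfold steinH
  positivity

lemma steinH_le_one_add_log (n : ℕ) : steinH n ≤ 1 + Real.log n := by
  rw [steinH_eq]
  exact_mod_cast harmonic_le_one_add_log n

/-- Harmonic difference lower bound: if `d' ≤ d ≤ s`, `0 < s`, then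
`(d - d')/s ≤ H d - H d'`. -/
lemma steinH_diff {d' d s : ℕ} (h1 : d' ≤ d) (h2 : d ≤ s) (hs : 0 < s) :
    ((d : ℝ) - d') / s ≤ steinH d - steinH d' := by
  unfold steinH
  rw [← Finset.sum_Ico_eq_sub _ h1]
  have hbd : ∀ i ∈ Finset.Ico d' d, (s : ℝ)⁻¹ ≤ ((i : ℝ) + 1)⁻¹ := by
    intro i hi
    rw [Finset.mem_Ico] at hi
    have hi1 : (i : ℝ) + 1 ≤ s := by
      have : i + 1 ≤ s := Nat.succ_le_of_lt (lt_of_lt_of_le hi.2 h2)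
      exact_mod_cast this
    have hpos : (0 : ℝ) < (i : ℝ) + 1 := by positivity
    exact inv_anti₀ hpos hi1
  have hmain := Finset.card_nsmul_le_sum (Finset.Ico d' d) _ _ hbd
  rw [Nat.card_Ico, nsmul_eq_mul] at hmain
  calc ((d : ℝ) - d') / s = ((d - d' : ℕ) : ℝ) * (s : ℝ)⁻¹ := by
        rw [Nat.cast_sub h1, div_eq_mul_inv]
    _ ≤ _ := hmain

/-- Key inductive lemma: greedy covering with harmonic potential. -/
lemma stein_key {V : Type*} [Fintype V] [DecidableEq V] (G : SimpleGraph V)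
    [DecidableRel G.Adj] (P Q : Finset V) (a : ℝ) (ha : 0 < a)
    (hdisj : Disjoint P Q)
    (hbip : ∀ u v : V, G.Adj u v → (u ∈ P ∧ v ∈ Q) ∨ (u ∈ Q ∧ v ∈ P))
    (hdegP : ∀ u ∈ P, a ≤ (G.degree u : ℝ)) :
    ∀ U : Finset V, U ⊆ P → ∃ Q' ⊆ Q, (∀ u ∈ U, ∃ v ∈ Q', G.Adj u v) ∧
      (Q'.card : ℝ) ≤ (1 / a) * ∑ q ∈ Q, steinH ((U.filter (fun u => G.Adj q u)).card) := by
  -- neighbours of a vertex of P all lie in Q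
  have hnbr : ∀ u ∈ P, Q.filter (fun q => G.Adj u q) = G.neighborFinset u := by
    intro u hu
    ext q
    simp only [Finset.mem_filter, SimpleGraph.mem_neighborFinset]
    refine ⟨fun h => h.2, fun h => ⟨?_, h⟩⟩
    rcases hbip u q h with ⟨_, hq⟩ | ⟨huQ, _⟩
    · exact hq
    · exact absurd huQ (Finset.disjoint_left.mp hdisj hu)
  -- double counting
  have hswap : ∀ A B : Finset V,
      ∑ q ∈ B, (A.filter (fun u => G.Adj q u)).card
        = ∑ u ∈ A, (B.filter (fun q => G.Adj u q)).card := by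
    intro A B
    simp only [Finset.card_filter]
    rw [Finset.sum_comm]
    refine Finset.sum_congr rfl fun u _ => Finset.sum_congr rfl fun q _ => ?_
    simp [G.adj_comm]
  intro U
  induction U using Finset.strongInduction with
  | _ U ih =>
    intro hU
    rcases U.eq_empty_or_nonempty with rfl | ⟨u0, hu0⟩
    · refine ⟨∅, Finset.empty_subset _, by simp, ?_⟩
      simp only [Finset.card_empty, Nat.cast_zero, Finset.filter_empty, Finset.card_empty]
      have : (0:ℝ) ≤ (1 / a) * ∑ _q ∈ Q, steinH 0 := by
        apply mul_nonneg (by positivity)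
        exact Finset.sum_nonneg fun _ _ => steinH_nonneg 0
      exact this
    · -- u0 has a neighbour q0 ∈ Q
      have hu0P : u0 ∈ P := hU hu0
      have hdeg0 : 0 < G.degree u0 := by
        have := hdegP u0 hu0P
        have : (0:ℝ) < G.degree u0 := lt_of_lt_of_le ha this
        exact_mod_cast this
      obtain ⟨q0, hq0⟩ : (G.neighborFinset u0).Nonempty := by
        rw [← Finset.card_pos, ← SimpleGraph.degree]; exact hdeg0
      have hq0Q : q0 ∈ Q := by
        have := (hnbr u0 hu0P) ▸ hq0
        exact (Finset.mem_filter.mp this).1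
      have hadj0 : G.Adj u0 q0 := SimpleGraph.mem_neighborFinset _ _ _ |>.mp hq0
      -- pick q* in Q maximizing f q := |N(q) ∩ U|
      set f : V → ℕ := fun q => (U.filter (fun u => G.Adj q u)).card with hf
      obtain ⟨qs, hqsQ, hmax⟩ := Finset.exists_max_image Q f ⟨q0, hq0Q⟩
      set S := U.filter (fun u => G.Adj qs u) with hS
      set s := S.card with hsdef
      have hSU : S ⊆ U := Finset.filter_subset _ _
      have hs1 : 1 ≤ s := by
        have h1 : 1 ≤ f q0 := by
          rw [hf]
          refine Finset.card_pos.mpr ⟨u0, ?_⟩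
          simp [hu0, hadj0.symm]
        exact le_trans h1 (hmax q0 hq0Q)
      have hSne : S.Nonempty := Finset.card_pos.mp hs1
      set U' := U \ S with hU'
      have hss : U' ⊂ U := Finset.sdiff_ssubset hSU hSne
      obtain ⟨Q'', hQ''Q, hcov, hcard⟩ := ih U' hss (Finset.Subset.trans (Finset.sdiff_subset) hU)
      refine ⟨insert qs Q'', Finset.insert_subset hqsQ hQ''Q, ?_, ?_⟩
      · intro u hu
        by_cases h : G.Adj qs u
        · exact ⟨qs, Finset.mem_insert_self _ _, h.symm⟩
        · have huU' : u ∈ U' := by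
            rw [hU', Finset.mem_sdiff]
            exact ⟨hu, fun hmem => h (Finset.mem_filter.mp hmem).2⟩
          obtain ⟨v, hv, hadj⟩ := hcov u huU'
          exact ⟨v, Finset.mem_insert_of_mem hv, hadj⟩
      · -- cardinality bound
        set f' : V → ℕ := fun q => (U'.filter (fun u => G.Adj q u)).card with hf'
        have hsplit : ∀ q, f q = f' q + (S.filter (fun u => G.Adj q u)).card := by
          intro q
          show (U.filter (fun u => G.Adj q u)).card
            = (U'.filter (fun u => G.Adj q u)).card + (S.filter (fun u => G.Adj q u)).card
          have hun : (U'.filter (fun u => G.Adj q u)) ∪ (S.filter (fun u => G.Adj q u))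
              = U.filter (fun u => G.Adj q u) := by
            rw [← Finset.filter_union, Finset.sdiff_union_of_subset hSU]
          rw [← hun]
          exact Finset.card_union_of_disjoint
            (Finset.disjoint_filter_filter Finset.sdiff_disjoint)
        have hle : ∀ q ∈ Q, f' q ≤ f q := fun q _ => by
          rw [hsplit q]; omega
        have hfs : ∀ q ∈ Q, f q ≤ s := by
          intro q hq
          have hle2 := hmax q hq
          have hfqs : f qs = s := rfl
          omega
        have hspos : (0:ℝ) < s := by exact_mod_cast hs1
        -- sum of differences is at least a
        have hkey : a ≤ ∑ q ∈ Q, (steinH (f q) - steinH (f' q)) := by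
          have hterm : ∀ q ∈ Q, ((f q : ℝ) - f' q) / s ≤ steinH (f q) - steinH (f' q) :=
            fun q hq => steinH_diff (hle q hq) (hfs q hq) hs1
          have hsum1 : ∑ q ∈ Q, ((f q : ℝ) - f' q) / s
              ≤ ∑ q ∈ Q, (steinH (f q) - steinH (f' q)) :=
            Finset.sum_le_sum hterm
          have hcount : ∑ q ∈ Q, ((f q : ℝ) - f' q) = ∑ u ∈ S, (G.degree u : ℝ) := by
            have : ∀ q, (f q : ℝ) - f' q = ((S.filter (fun u => G.Adj q u)).card : ℝ) := by
              intro q; rw [hsplit q]; push_cast; ring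
            simp_rw [this]
            rw [← Nat.cast_sum, hswap S Q, Nat.cast_sum]
            refine Finset.sum_congr rfl fun u hu => ?_
            rw [hnbr u (hU (hSU hu))]
            rfl
          have hdegS : a * s ≤ ∑ u ∈ S, (G.degree u : ℝ) := by
            calc a * s = ∑ _u ∈ S, a := by rw [Finset.sum_const, nsmul_eq_mul]; ring
              _ ≤ ∑ u ∈ S, (G.degree u : ℝ) :=
                Finset.sum_le_sum fun u hu => hdegP u (hU (hSU hu))
          have : a ≤ (∑ q ∈ Q, ((f q : ℝ) - f' q)) / s := by
            rw [hcount, le_div_iff₀ hspos]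
            linarith
          calc a ≤ (∑ q ∈ Q, ((f q : ℝ) - f' q)) / s := this
            _ = ∑ q ∈ Q, ((f q : ℝ) - f' q) / s := by rw [Finset.sum_div]
            _ ≤ _ := hsum1
        have hstep : (1/a) * (∑ q ∈ Q, steinH (f' q)) + 1 ≤ (1/a) * ∑ q ∈ Q, steinH (f q) := by
          have h2 : (1/a) * a ≤ (1/a) * (∑ q ∈ Q, steinH (f q) - ∑ q ∈ Q, steinH (f' q)) := by
            apply mul_le_mul_of_nonneg_left _ (by positivity)
            rw [← Finset.sum_sub_distrib]
            exact hkey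
          have h1 : (1/a) * a = 1 := by field_simp
          rw [mul_sub] at h2
          linarith
        calc ((insert qs Q'').card : ℝ) ≤ (Q''.card : ℝ) + 1 := by
              have := Finset.card_insert_le qs Q''
              exact_mod_cast this
          _ ≤ (1/a) * (∑ q ∈ Q, steinH (f' q)) + 1 := by linarith
          _ ≤ (1/a) * ∑ q ∈ Q, steinH (f q) := hstep

/-- Lovász–Stein covering lemma: in a finite bipartite graph with parts `P`, `Q`,
if every vertex of `P` has degree at least `a > 0` and every vertex of `Q` has
degree at most `b ≥ 1`, then there is `Q' ⊆ Q` covering `P` with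
`|Q'| ≤ (|Q|/a)·(1 + log b)`. -/
theorem stmt_7 {V : Type*} [Fintype V] [DecidableEq V] (G : SimpleGraph V)
    [DecidableRel G.Adj] (P Q : Finset V) (a b : ℝ)
    (ha : 0 < a) (hb : 1 ≤ b)
    (hdisj : Disjoint P Q)
    (hbip : ∀ u v : V, G.Adj u v → (u ∈ P ∧ v ∈ Q) ∨ (u ∈ Q ∧ v ∈ P))
    (hdegP : ∀ u ∈ P, a ≤ (G.degree u : ℝ))
    (hdegQ : ∀ v ∈ Q, (G.degree v : ℝ) ≤ b) :
    ∃ Q' ⊆ Q, (∀ u ∈ P, ∃ v ∈ Q', G.Adj u v) ∧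
      (Q'.card : ℝ) ≤ ((Q.card : ℝ) / a) * (1 + Real.log b) := by
  obtain ⟨Q', hQ'Q, hcov, hcard⟩ := stein_key G P Q a ha hdisj hbip hdegP P le_rfl
  refine ⟨Q', hQ'Q, hcov, hcard.trans ?_⟩
  have hbound : ∀ q ∈ Q, steinH ((P.filter (fun u => G.Adj q u)).card) ≤ 1 + Real.log b := by
    intro q hq
    set d := (P.filter (fun u => G.Adj q u)).card with hd
    rcases Nat.eq_zero_or_pos d with h0 | hpos
    · rw [h0]
      have : steinH 0 = 0 := by simp [steinH]
      rw [this]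
      have := Real.log_nonneg hb
      linarith
    · refine (steinH_le_one_add_log d).trans ?_
      have hdb : (d : ℝ) ≤ b := by
        have hsub : P.filter (fun u => G.Adj q u) ⊆ G.neighborFinset q := by
          intro u hu
          rw [SimpleGraph.mem_neighborFinset]
          exact (Finset.mem_filter.mp hu).2
        have := Finset.card_le_card hsub
        calc (d : ℝ) ≤ (G.degree q : ℝ) := by exact_mod_cast this
          _ ≤ b := hdegQ q hq
      have : Real.log d ≤ Real.log b := Real.log_le_log (by exact_mod_cast hpos) hdb
      linarith
  calc (1 / a) * ∑ q ∈ Q, steinH ((P.filter (fun u => G.Adj q u)).card)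
      ≤ (1 / a) * ∑ _q ∈ Q, (1 + Real.log b) := by
        apply mul_le_mul_of_nonneg_left (Finset.sum_le_sum hbound) (by positivity)
    _ = ((Q.card : ℝ) / a) * (1 + Real.log b) := by
        rw [Finset.sum_const, nsmul_eq_mul]
        ring
end

section
/- In a finite graph G with maximum degree Δ ≥ 1, the number of connected subsets of vertices of size ℓ containing a fixed vertex v is at most (e·Δ)^{ℓ−1}. -/
open Finset
namespace Stmt8Aux
set_option linter.unusedSectionVars false
set_option linter.unusedTactic false
set_option linter.unreachableTactic false
set_option maxHeartbeats 1000000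

set_option linter.unusedSectionVars false

variable {V : Type*} [Fintype V] [DecidableEq V] (G : SimpleGraph V) [DecidableRel G.Adj]

noncomputable def nbrs (u : V) : List V := (G.neighborFinset u).toList

lemma mem_nbrs {u w : V} : w ∈ nbrs G u ↔ G.Adj u w := by simp [nbrs]

noncomputable def rk (u w : V) : ℕ := (nbrs G u).idxOf w

lemma rk_lt_degree {u w : V} (h : G.Adj u w) : rk G u w < G.degree u := by
  have hm : w ∈ nbrs G u := (mem_nbrs G).2 h
  have hlt := List.idxOf_lt_length_iff.2 hm
  have hlen : (nbrs G u).length = G.degree u := by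
    rw [nbrs, Finset.length_toList, SimpleGraph.degree]
  rw [rk]; omega

lemma nbrs_getD {u w : V} (h : G.Adj u w) (d : V) :
    (nbrs G u).getD (rk G u w) d = w := by
  have hm : w ∈ nbrs G u := (mem_nbrs G).2 h
  have hlt := List.idxOf_lt_length_iff.2 hm
  rw [rk, List.getD_eq_getElem _ _ hlt]
  exact List.getElem_idxOf hlt

lemma rk_inj {u w w' : V} (h : G.Adj u w) (h' : G.Adj u w')
    (e : rk G u w = rk G u w') : w = w' := by
  have h1 := nbrs_getD G h u
  rw [e, nbrs_getD G h' u] at h1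
  exact h1.symm

open Classical in
noncomputable def pIdx (u : ℕ → V) (k : ℕ) (w : V) : ℕ :=
  if h : ∃ i, i < k ∧ G.Adj (u i) w then Nat.find h else 0

/-- the code of `w` relative to prefix `u 0, …, u (k-1)` -/
noncomputable def code (Δ : ℕ) (u : ℕ → V) (k : ℕ) (w : V) : ℕ :=
  pIdx G u k w * Δ + rk G (u (pIdx G u k w)) w

open Classical in
lemma pIdx_spec {u : ℕ → V} {k : ℕ} {w : V} (h : ∃ i, i < k ∧ G.Adj (u i) w) :
    pIdx G u k w < k ∧ G.Adj (u (pIdx G u k w)) w ∧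
      ∀ i < pIdx G u k w, ¬ G.Adj (u i) w := by
  rw [pIdx, dif_pos h]
  refine ⟨(Nat.find_spec h).1, (Nat.find_spec h).2, fun i hi hadj => ?_⟩
  exact (Nat.find_min h hi) ⟨lt_trans hi (Nat.find_spec h).1, hadj⟩

open Classical in
lemma pIdx_eq_of {u : ℕ → V} {k : ℕ} {w : V} {p : ℕ} (hp : p < k)
    (hadj : G.Adj (u p) w) (hmin : ∀ i < p, ¬ G.Adj (u i) w) :
    pIdx G u k w = p := by
  have h : ∃ i, i < k ∧ G.Adj (u i) w := ⟨p, hp, hadj⟩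
  rw [pIdx, dif_pos h]
  exact (Nat.find_eq_iff h).2 ⟨⟨hp, hadj⟩, fun i hi hc => hmin i hi hc.2⟩

lemma code_stable {Δ : ℕ} {u u' : ℕ → V} {k k' : ℕ} {w : V}
    (hk : k ≤ k') (hagree : ∀ i < k, u' i = u i)
    (h : ∃ i, i < k ∧ G.Adj (u i) w) :
    code G Δ u' k' w = code G Δ u k w := by
  obtain ⟨hplt, hpadj, hpmin⟩ := pIdx_spec G h
  have h1 : pIdx G u' k' w = pIdx G u k w := by
    apply pIdx_eq_of G (lt_of_lt_of_le hplt hk)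
    · rw [hagree _ hplt]; exact hpadj
    · intro i hi
      rw [hagree i (lt_trans hi hplt)]
      exact hpmin i hi
  rw [code, code, h1, hagree _ hplt]

lemma code_new {Δ : ℕ} {u : ℕ → V} {k : ℕ} {w : V}
    (h : ¬ ∃ i, i < k ∧ G.Adj (u i) w) (hadj : G.Adj (u k) w) :
    Δ * k ≤ code G Δ u (k+1) w := by
  have h1 : pIdx G u (k+1) w = k :=
    pIdx_eq_of G (Nat.lt_succ_self k) hadj (fun i hi hc => h ⟨i, hi, hc⟩)
  rw [code, h1, Nat.mul_comm Δ k]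
  omega

lemma rk_lt_D {Δ : ℕ} (hdeg : ∀ x : V, G.degree x ≤ Δ) {x w : V} (h : G.Adj x w) :
    rk G x w < Δ :=
  lt_of_lt_of_le (rk_lt_degree G h) (hdeg x)

lemma code_lt {Δ : ℕ} {u : ℕ → V} {k : ℕ} {w : V}
    (hdeg : ∀ x : V, G.degree x ≤ Δ)
    (h : ∃ i, i < k ∧ G.Adj (u i) w) :
    code G Δ u k w < Δ * k := by
  obtain ⟨hplt, hpadj, _⟩ := pIdx_spec G h
  have hr := rk_lt_D G hdeg hpadj
  rw [code]
  nlinarith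

lemma code_injOn {Δ : ℕ} {u : ℕ → V} {k : ℕ} {w w' : V}
    (hdeg : ∀ x : V, G.degree x ≤ Δ)
    (h : ∃ i, i < k ∧ G.Adj (u i) w) (h' : ∃ i, i < k ∧ G.Adj (u i) w')
    (e : code G Δ u k w = code G Δ u k w') : w = w' := by
  obtain ⟨hplt, hpadj, _⟩ := pIdx_spec G h
  obtain ⟨hplt', hpadj', _⟩ := pIdx_spec G h'
  have hr := rk_lt_D G hdeg hpadj
  have hr' := rk_lt_D G hdeg hpadj'
  rw [code, code] at e
  have hpp : pIdx G u k w = pIdx G u k w' := by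
    rcases lt_trichotomy (pIdx G u k w) (pIdx G u k w') with hc | hc | hc
    · nlinarith
    · exact hc
    · nlinarith
  rw [hpp] at e hpadj
  exact rk_inj G hpadj hpadj' (by omega)

lemma code_decode {Δ : ℕ} {u : ℕ → V} {k : ℕ} {w : V}
    (hdeg : ∀ x : V, G.degree x ≤ Δ)
    (h : ∃ i, i < k ∧ G.Adj (u i) w) (d : V) :
    code G Δ u k w / Δ = pIdx G u k w ∧
    (nbrs G (u (code G Δ u k w / Δ))).getD (code G Δ u k w % Δ) d = w := by
  obtain ⟨hplt, hpadj, _⟩ := pIdx_spec G h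
  have hr := rk_lt_D G hdeg hpadj
  have hΔ : 0 < Δ := by omega
  have hdiv : code G Δ u k w / Δ = pIdx G u k w := by
    rw [code, Nat.mul_comm _ Δ, Nat.mul_add_div hΔ, Nat.div_eq_of_lt hr]; omega
  have hmod : code G Δ u k w % Δ = rk G (u (pIdx G u k w)) w := by
    rw [code, Nat.mul_comm _ Δ, Nat.mul_add_mod, Nat.mod_eq_of_lt hr]
  refine ⟨hdiv, ?_⟩
  rw [hdiv, hmod, nbrs_getD G hpadj]


lemma walk_crossing {S : Set V} (T : Finset V) {x y : ↑S}
    (p : (G.induce S).Walk x y) (hx : (x : V) ∈ T) (hy : (y : V) ∉ T) :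
    ∃ w : V, w ∈ S ∧ w ∉ T ∧ ∃ t ∈ T, G.Adj t w := by
  induction p with
  | nil => exact absurd hx hy
  | @cons a b c hab q ih =>
    by_cases hbT : (b : V) ∈ T
    · exact ih hbT hy
    · refine ⟨b, b.2, hbT, a, hx, ?_⟩
      simpa using hab

lemma exists_adj_outside {S T : Finset V} (hconn : (G.induce (S : Set V)).Connected)
    (hTS : T ⊆ S) {a b : V} (ha : a ∈ T) (hb : b ∈ S) (hbT : b ∉ T) :
    ∃ w ∈ S, w ∉ T ∧ ∃ t ∈ T, G.Adj t w := by
  have hx : a ∈ (S : Set V) := hTS ha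
  obtain ⟨p⟩ := hconn.preconnected ⟨a, hx⟩ ⟨b, by simpa using hb⟩
  obtain ⟨w, hwS, hwT, t, ht, hadj⟩ := walk_crossing G T p ha hbT
  exact ⟨w, by simpa using hwS, hwT, t, ht, hadj⟩


def Good (Δ : ℕ) (v : V) (S : Finset V) (u : ℕ → V) (k : ℕ) : Prop :=
  u 0 = v ∧
  (∀ i < k, u i ∈ S) ∧
  (∀ i j, i < j → j < k → u i ≠ u j) ∧
  (∀ j, 1 ≤ j → j < k → ∃ i, i < j ∧ G.Adj (u i) (u j)) ∧
  (∀ i j, 1 ≤ i → i < j → j < k → code G Δ u i (u i) < code G Δ u j (u j)) ∧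
  (∀ w ∈ S, (∀ i < k, u i ≠ w) → (∃ i, i < k ∧ G.Adj (u i) w) →
    ∀ j, 1 ≤ j → j < k → code G Δ u j (u j) < code G Δ u k w)

lemma exists_good {Δ ℓ : ℕ} (hdeg : ∀ x : V, G.degree x ≤ Δ) {v : V} {S : Finset V}
    (hv : v ∈ S) (hconn : (G.induce (S : Set V)).Connected) (hcard : S.card = ℓ) :
    ∀ k, 1 ≤ k → k ≤ ℓ → ∃ u : ℕ → V, Good G Δ v S u k := by
  classical
  intro k
  induction k with
  | zero => omega
  | succ k ih =>
    intro _ hkl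
    rcases Nat.eq_or_lt_of_le (Nat.one_le_iff_ne_zero.2 (by omega) : 1 ≤ k + 1) with h1 | h1
    · -- base case k + 1 = 1
      refine ⟨fun _ => v, rfl, fun i hi => by simpa using hv, ?_, ?_, ?_, ?_⟩ <;>
        · intros; omega
    · -- step: k ≥ 1
      have hk1 : 1 ≤ k := by omega
      obtain ⟨u, hu0, humem, huinj, hunbr, humono, hugreedy⟩ := ih hk1 (by omega)
      set T : Finset V := Finset.image u (Finset.range k) with hT
      have hTS : T ⊆ S := by
        intro t ht
        obtain ⟨i, hi, rfl⟩ := Finset.mem_image.1 ht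
        exact humem i (Finset.mem_range.1 hi)
      have hTcard : T.card = k := by
        rw [hT, Finset.card_image_of_injOn, Finset.card_range]
        intro i hi j hj hij
        rcases lt_trichotomy i j with h | h | h
        · exact absurd hij (huinj i j h (Finset.mem_range.1 hj))
        · exact h
        · exact absurd hij.symm (huinj j i h (Finset.mem_range.1 hi))
      have hvT : v ∈ T := by
        rw [hT]
        exact Finset.mem_image.2 ⟨0, Finset.mem_range.2 (by omega), hu0⟩
      obtain ⟨b, hbS, hbT⟩ : ∃ b ∈ S, b ∉ T := by
        by_contra hc
        push_neg at hc
        have := Finset.card_le_card hc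
        omega
      obtain ⟨w, hwS, hwT, t, htT, htw⟩ := exists_adj_outside G hconn hTS hvT hbS hbT
      have hnotmemT : ∀ {x : V}, x ∉ T → ∀ i < k, u i ≠ x := by
        intro x hx i hi he
        exact hx (Finset.mem_image.2 ⟨i, Finset.mem_range.2 hi, he⟩)
      set C : Finset V := S.filter (fun x => x ∉ T ∧ ∃ i, i < k ∧ G.Adj (u i) x) with hC
      have hCne : C.Nonempty := by
        refine ⟨w, Finset.mem_filter.2 ⟨hwS, hwT, ?_⟩⟩
        obtain ⟨i, hi, rfl⟩ := Finset.mem_image.1 htT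
        exact ⟨i, Finset.mem_range.1 hi, htw⟩
      obtain ⟨w₀, hw₀C, hmin⟩ := C.exists_min_image (code G Δ u k) hCne
      obtain ⟨hw₀S, hw₀T, hex₀⟩ := Finset.mem_filter.1 hw₀C
      set u' : ℕ → V := Function.update u k w₀ with hu'
      have hagree : ∀ i < k, u' i = u i := fun i hi =>
        Function.update_of_ne (by omega) _ _
      have hu'k : u' k = w₀ := Function.update_self _ _ _
      -- code computations
      have hcode_lt_j : ∀ j, 1 ≤ j → j < k → code G Δ u' j (u' j) = code G Δ u j (u j) := by
        intro j h1j hjk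
        rw [hagree j hjk]
        exact code_stable G le_rfl (fun i hi => hagree i (by omega)) (hunbr j h1j hjk)
      have hcode_k : code G Δ u' k (u' k) = code G Δ u k w₀ := by
        rw [hu'k]
        exact code_stable G le_rfl hagree hex₀
      refine ⟨u', ?_, ?_, ?_, ?_, ?_, ?_⟩
      · rw [hagree 0 (by omega)]; exact hu0
      · intro i hi
        rcases Nat.lt_succ_iff_lt_or_eq.1 hi with h | h
        · rw [hagree i h]; exact humem i h
        · rw [h, hu'k]; exact hw₀S
      · intro i j hij hjk1
        rcases Nat.lt_succ_iff_lt_or_eq.1 hjk1 with h | h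
        · rw [hagree i (by omega), hagree j h]; exact huinj i j hij h
        · subst h
          rw [hagree i (by omega), hu'k]
          exact hnotmemT hw₀T i (by omega)
      · intro j h1j hjk1
        rcases Nat.lt_succ_iff_lt_or_eq.1 hjk1 with h | h
        · obtain ⟨i, hi, hadj⟩ := hunbr j h1j h
          refine ⟨i, hi, ?_⟩
          rw [hagree i (by omega), hagree j h]
          exact hadj
        · subst h
          obtain ⟨i, hi, hadj⟩ := hex₀
          refine ⟨i, hi, ?_⟩
          rw [hagree i hi, hu'k]
          exact hadj
      · intro i j h1i hij hjk1
        rcases Nat.lt_succ_iff_lt_or_eq.1 hjk1 with h | h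
        · rw [hcode_lt_j i h1i (by omega), hcode_lt_j j (by omega) h]
          exact humono i j h1i hij h
        · rw [h, hcode_k, hcode_lt_j i h1i (h ▸ hij)]
          exact hugreedy w₀ hw₀S (hnotmemT hw₀T) hex₀ i h1i (h ▸ hij)
      · -- greedy invariant at k+1
        intro x hxS hxne hxex j h1j hjk1
        by_cases hold : ∃ i, i < k ∧ G.Adj (u i) x
        · have hrhs : code G Δ u' (k+1) x = code G Δ u k x :=
            code_stable G (by omega) hagree hold
          rw [hrhs]
          have hxT : x ∉ T := by
            intro hc
            obtain ⟨i, hi, he⟩ := Finset.mem_image.1 hc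
            exact hxne i (by simp at hi; omega) (by rw [hagree i (Finset.mem_range.1 hi)]; exact he)
          rcases Nat.lt_succ_iff_lt_or_eq.1 hjk1 with h | h
          · rw [hcode_lt_j j h1j h]
            exact hugreedy x hxS (hnotmemT hxT) hold j h1j h
          · rw [h, hcode_k]
            have hle : code G Δ u k w₀ ≤ code G Δ u k x :=
              hmin x (Finset.mem_filter.2 ⟨hxS, hxT, hold⟩)
            rcases lt_or_eq_of_le hle with h2 | h2
            · exact h2
            · exfalso
              have h3 := code_injOn G hdeg hex₀ hold h2
              exact hxne k (by omega) (by rw [hu'k]; exact h3)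
        · -- x newly adjacent only via u' k = w₀
          have hold' : ¬ ∃ i, i < k ∧ G.Adj (u' i) x := by
            intro ⟨i, hi, hadj⟩
            exact hold ⟨i, hi, by rw [← hagree i hi]; exact hadj⟩
          have hadjk : G.Adj (u' k) x := by
            obtain ⟨i, hi, hadj⟩ := hxex
            rcases Nat.lt_succ_iff_lt_or_eq.1 hi with h | h
            · exact absurd ⟨i, h, hadj⟩ hold'
            · rw [← h]; exact hadj
          have hrhs := code_new G (Δ := Δ) hold' hadjk
          have hlhs : code G Δ u' j (u' j) < Δ * k := by
            rcases Nat.lt_succ_iff_lt_or_eq.1 hjk1 with h | h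
            · rw [hcode_lt_j j h1j h]
              have := code_lt G hdeg (hunbr j h1j h)
              have hΔ : Δ * j ≤ Δ * k := Nat.mul_le_mul_left Δ (by omega)
              omega
            · rw [h, hcode_k]
              exact code_lt G hdeg hex₀
          omega
  


lemma choose_bound (D k : ℕ) : ((D*k).choose k : ℝ) ≤ (Real.exp 1 * D) ^ k := by
  calc ((D*k).choose k : ℝ) ≤ ((D*k)^k : ℝ) / (Nat.factorial k) := by
        exact_mod_cast Nat.choose_le_pow_div k (D*k)
    _ = (D:ℝ)^k * ((k:ℝ)^k / (Nat.factorial k)) := by push_cast; ring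
    _ ≤ (D:ℝ)^k * Real.exp k := by
        gcongr
        exact Real.pow_div_factorial_le_exp (x := (k:ℝ)) (Nat.cast_nonneg k) k
    _ = (Real.exp 1 * D) ^ k := by
        rw [mul_pow, ← Real.exp_nat_mul]; ring_nf

end Stmt8Aux

open Stmt8Aux


/-- In a finite graph of maximum degree at most `Δ ≥ 1`, the number of vertex
subsets of size `ℓ` containing a fixed vertex `v` that induce a connected
subgraph is at most `(e·Δ)^{ℓ−1}`. -/
theorem stmt_8 {V : Type*} [Fintype V] [DecidableEq V] (G : SimpleGraph V)
    [DecidableRel G.Adj] (Δ : ℕ) (hΔ : 1 ≤ Δ)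
    (hdeg : ∀ w : V, G.degree w ≤ Δ) (v : V) (ℓ : ℕ) (hℓ : 1 ≤ ℓ) :
    (({S : Finset V | v ∈ S ∧ S.card = ℓ ∧
        (G.induce (S : Set V)).Connected} : Set (Finset V)).ncard : ℝ) ≤
      (Real.exp 1 * Δ) ^ (ℓ - 1) := by
  classical
  set A : Set (Finset V) := {S : Finset V | v ∈ S ∧ S.card = ℓ ∧
      (G.induce (S : Set V)).Connected} with hA
  have hch : ∀ S ∈ A, ∃ u : ℕ → V, Good G Δ v S u ℓ := fun S hS =>
    exists_good G hdeg hS.1 hS.2.2 hS.2.1 ℓ hℓ le_rfl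
  have hne : Nonempty V := ⟨v⟩
  choose! u hu using hch
  set Φ : Finset V → Finset ℕ := fun S =>
    Finset.image (fun j => code G Δ (u S) j (u S j)) (Finset.Ico 1 ℓ) with hΦ
  -- image is in powersetCard
  have hmaps : ∀ S ∈ A, Φ S ∈
      ((Finset.range (Δ * (ℓ-1))).powersetCard (ℓ-1) : Finset (Finset ℕ)) := by
    intro S hS
    obtain ⟨hu0, hmem, hinj, hnbr, hmono, -⟩ := hu S hS
    rw [Finset.mem_powersetCard]
    constructor
    · intro c hc
      obtain ⟨j, hj, rfl⟩ := Finset.mem_image.1 hc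
      rw [Finset.mem_Ico] at hj
      have h1 := code_lt G hdeg (hnbr j hj.1 hj.2)
      have h2 : Δ * j ≤ Δ * (ℓ - 1) := Nat.mul_le_mul_left Δ (by omega)
      rw [Finset.mem_range]
      omega
    · rw [Finset.card_image_of_injOn, Nat.card_Ico]
      intro i hi j hj hij
      rw [Finset.mem_coe, Finset.mem_Ico] at hi hj
      rcases lt_trichotomy i j with h | h | h
      · exact absurd hij (Nat.ne_of_lt (hmono i j hi.1 h hj.2))
      · exact h
      · exact absurd hij.symm (Nat.ne_of_lt (hmono j i hj.1 h hi.2))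
  -- injectivity
  have hinjΦ : Set.InjOn Φ A := by
    intro S hS S' hS' he
    obtain ⟨hu0, hmem, hinj, hnbr, hmono, -⟩ := hu S hS
    obtain ⟨hu0', hmem', hinj', hnbr', hmono', -⟩ := hu S' hS'
    have hcardS : (Φ S).card = ℓ - 1 := (Finset.mem_powersetCard.1 (hmaps S hS)).2
    -- the two strictly monotone enumerations of the common code set agree
    have hkey : ∀ j, 1 ≤ j → j < ℓ →
        code G Δ (u S) j (u S j) = code G Δ (u S') j (u S' j) := by
      set f : Fin (ℓ-1) → ℕ := fun x => code G Δ (u S) (x.1+1) (u S (x.1+1)) with hf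
      set f' : Fin (ℓ-1) → ℕ := fun x => code G Δ (u S') (x.1+1) (u S' (x.1+1)) with hf'
      have hsm : StrictMono f := by
        intro a b hab
        exact hmono (a.1+1) (b.1+1) (by omega) (by omega) (by omega)
      have hsm' : StrictMono f' := by
        intro a b hab
        exact hmono' (a.1+1) (b.1+1) (by omega) (by omega) (by omega)
      have hfs : ∀ x, f x ∈ Φ S := by
        intro x
        exact Finset.mem_image.2 ⟨x.1+1, Finset.mem_Ico.2 ⟨by omega, by omega⟩, rfl⟩
      have hfs' : ∀ x, f' x ∈ Φ S := by
        intro x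
        rw [he]
        exact Finset.mem_image.2 ⟨x.1+1, Finset.mem_Ico.2 ⟨by omega, by omega⟩, rfl⟩
      have e1 := Finset.orderEmbOfFin_unique hcardS hfs hsm
      have e2 := Finset.orderEmbOfFin_unique hcardS hfs' hsm'
      intro j h1j hjl
      have : f ⟨j-1, by omega⟩ = f' ⟨j-1, by omega⟩ := by rw [e1, e2]
      simpa [hf, hf', Nat.sub_add_cancel h1j] using this
    -- vertices agree
    have hvert : ∀ j, j < ℓ → u S j = u S' j := by
      intro j
      induction j using Nat.strong_induction_on with
      | _ j ih2 =>
        intro hjl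
        rcases Nat.eq_zero_or_pos j with rfl | hj
        · rw [hu0, hu0']
        · have hex := hnbr j hj hjl
          have hex' := hnbr' j hj hjl
          have hdec := code_decode G hdeg hex v
          have hdec' := code_decode G hdeg hex' v
          obtain ⟨hplt, -, -⟩ := pIdx_spec G hex
          have hc := hkey j hj hjl
          have hplt2 : code G Δ (u S) j (u S j) / Δ < j := by
            rw [hdec.1]; exact hplt
          rw [← hdec.2, ← hdec'.2, ← hc, ih2 _ hplt2 (by omega)]
    -- sets agree
    have himg : ∀ S₀ (hS₀ : S₀ ∈ A), (∀ j < ℓ, True) →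
        S₀ = Finset.image (u S₀) (Finset.range ℓ) := by
      intro S₀ hS₀ _
      obtain ⟨hu0₀, hmem₀, hinj₀, -, -, -⟩ := hu S₀ hS₀
      refine (Finset.eq_of_subset_of_card_le ?_ ?_).symm
      · intro t ht
        obtain ⟨i, hi, rfl⟩ := Finset.mem_image.1 ht
        exact hmem₀ i (Finset.mem_range.1 hi)
      · rw [Finset.card_image_of_injOn, Finset.card_range, hS₀.2.1]
        intro i hi j hj hij
        rcases lt_trichotomy i j with h | h | h
        · exact absurd hij (hinj₀ i j h (Finset.mem_range.1 hj))
        · exact h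
        · exact absurd hij.symm (hinj₀ j i h (Finset.mem_range.1 hi))
    have h1 := himg S hS (fun _ _ => trivial)
    have h2 := himg S' hS' (fun _ _ => trivial)
    rw [h1, h2]
    apply Finset.image_congr
    intro i hi
    exact hvert i (Finset.mem_range.1 (by simpa using hi))
  -- count
  have hcount : A.ncard ≤ (Δ * (ℓ-1)).choose (ℓ-1) := by
    have := Set.ncard_le_ncard_of_injOn Φ
      (fun S hS => by
        simpa using (hmaps S hS) :
        ∀ S ∈ A, Φ S ∈ (((Finset.range (Δ * (ℓ-1))).powersetCard (ℓ-1) : Finset (Finset ℕ)) : Set (Finset ℕ)))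
      hinjΦ (Finset.finite_toSet _)
    rwa [Set.ncard_coe_finset, Finset.card_powersetCard, Finset.card_range] at this
  calc (A.ncard : ℝ) ≤ ((Δ * (ℓ-1)).choose (ℓ-1) : ℝ) := by exact_mod_cast hcount
    _ ≤ (Real.exp 1 * Δ) ^ (ℓ-1) := Stmt8Aux.choose_bound Δ (ℓ-1)
end

section
/- For any subset A of the even side of the hypercube Q_d with |A| ≤ 2^{d−2}, we have |N(A)| ≥ (1 + 1/(2√d))·|A|. -/
open Finset

/-- The hypercube graph `Q_d` on `{0,1}^d`: two vertices are adjacent iff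
their Hamming distance is `1`. -/
def cubeGraph (d : ℕ) : SimpleGraph (Fin d → Bool) where
  Adj u v := hammingDist u v = 1
  symm := ⟨fun u v (h : hammingDist u v = 1) => show hammingDist v u = 1 by rwa [hammingDist_comm]⟩
  loopless := ⟨fun u (h : hammingDist u u = 1) => by simp [hammingDist_self] at h⟩

instance (d : ℕ) : DecidableRel (cubeGraph d).Adj := fun u v =>
  inferInstanceAs (Decidable (hammingDist u v = 1))

/-- Hamming weight of a vertex of the hypercube. -/
def hammingWeight {d : ℕ} (u : Fin d → Bool) : ℕ :=
  hammingDist u (fun _ => false)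

/-- The neighbourhood of a set of vertices of the hypercube. -/
def cubeNbhd {d : ℕ} (A : Finset (Fin d → Bool)) : Finset (Fin d → Bool) :=
  A.biUnion fun x => (cubeGraph d).neighborFinset x

/-! ### Auxiliary development: Talagrand's isoperimetric inequality on the cube -/

def flipBit {n : ℕ} (i : Fin n) (x : Fin n → Bool) : Fin n → Bool :=
  Function.update x i (!(x i))

lemma hammingDist_flipBit {n : ℕ} (i : Fin n) (x : Fin n → Bool) :
    hammingDist (flipBit i x) x = 1 := by
  unfold hammingDist flipBit
  rw [Finset.card_eq_one]
  refine ⟨i, ?_⟩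
  ext j
  simp only [Finset.mem_filter, Finset.mem_univ, true_and, Finset.mem_singleton]
  constructor
  · intro h
    by_contra hj
    exact h (by rw [Function.update_of_ne hj])
  · rintro rfl
    simp

def hcount {n : ℕ} (A : Finset (Fin n → Bool)) (x : Fin n → Bool) : ℕ :=
  if x ∈ A then ({i : Fin n | flipBit i x ∉ A} : Finset (Fin n)).card else 0

lemma hcount_le {n : ℕ} (A : Finset (Fin n → Bool)) (x : Fin n → Bool) :
    hcount A x ≤ n := by
  unfold hcount
  split
  · exact le_trans (Finset.card_le_univ _) (by simp)
  · exact Nat.zero_le _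

def cubeSlice {n : ℕ} (A : Finset (Fin (n+1) → Bool)) (b : Bool) : Finset (Fin n → Bool) :=
  ({x : Fin n → Bool | Fin.cons b x ∈ A} : Finset _)

lemma flip_cons_zero {n : ℕ} (b : Bool) (x : Fin n → Bool) :
    flipBit 0 (Fin.cons b x) = Fin.cons (!b) x := by
  unfold flipBit
  rw [show (Fin.cons b x : Fin (n+1) → Bool) 0 = b from Fin.cons_zero _ _,
    Fin.update_cons_zero]

lemma flip_cons_succ {n : ℕ} (b : Bool) (x : Fin n → Bool) (i : Fin n) :
    flipBit i.succ (Fin.cons b x) = Fin.cons b (flipBit i x) := by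
  unfold flipBit
  rw [show (Fin.cons b x : Fin (n+1) → Bool) i.succ = x i from Fin.cons_succ _ _ _,
    Fin.cons_update]

lemma hcount_cons {n : ℕ} (A : Finset (Fin (n+1) → Bool)) (b : Bool) (x : Fin n → Bool) :
    hcount A (Fin.cons b x) =
      hcount (cubeSlice A b) x + (if x ∈ cubeSlice A b ∧ x ∉ cubeSlice A (!b) then 1 else 0) := by
  have hmem : ∀ c y, (Fin.cons c y : Fin (n+1) → Bool) ∈ A ↔ y ∈ cubeSlice A c := by
    intro c y; simp [cubeSlice]
  unfold hcount
  by_cases hx : x ∈ cubeSlice A b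
  · rw [if_pos ((hmem b x).2 hx), if_pos hx]
    have : ({i : Fin (n+1) | flipBit i (Fin.cons b x) ∉ A} : Finset (Fin (n+1))).card
        = ∑ i : Fin (n+1), if flipBit i (Fin.cons b x) ∉ A then 1 else 0 := by
      simpa using Finset.card_filter (fun i => flipBit i (Fin.cons b x) ∉ A) univ
    rw [this, Fin.sum_univ_succ]
    have h0 : (if flipBit 0 (Fin.cons b x) ∉ A then 1 else 0)
        = (if x ∈ cubeSlice A b ∧ x ∉ cubeSlice A (!b) then 1 else 0) := by
      rw [flip_cons_zero]
      by_cases h : x ∈ cubeSlice A (!b)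
      · rw [if_neg (by simpa using (hmem (!b) x).2 h), if_neg (by tauto)]
      · rw [if_pos (by simpa using fun hc => h ((hmem (!b) x).1 hc)), if_pos ⟨hx, h⟩]
    have hs : (∑ i : Fin n, if flipBit i.succ (Fin.cons b x) ∉ A then 1 else 0)
        = ({i : Fin n | flipBit i x ∉ cubeSlice A b} : Finset (Fin n)).card := by
      rw [show ({i : Fin n | flipBit i x ∉ cubeSlice A b} : Finset (Fin n)).card
          = ∑ i : Fin n, if flipBit i x ∉ cubeSlice A b then 1 else 0 by
        simpa using Finset.card_filter (fun i => flipBit i x ∉ cubeSlice A b) univ]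
      refine Finset.sum_congr rfl fun i _ => ?_
      rw [flip_cons_succ]
      by_cases h : flipBit i x ∈ cubeSlice A b
      · rw [if_neg (by simpa using (hmem b _).2 h), if_neg (by simpa using h)]
      · rw [if_pos (by simpa using fun hc => h ((hmem b _).1 hc)), if_pos (by simpa using h)]
    omega
  · rw [if_neg (fun hc => hx ((hmem b x).1 hc)), if_neg hx, if_neg (by tauto)]

lemma card_eq_cubeSlices {n : ℕ} (A : Finset (Fin (n+1) → Bool)) :
    A.card = (cubeSlice A false).card + (cubeSlice A true).card := by
  classical
  have h : A = (cubeSlice A false).image (fun x : Fin n → Bool => (Fin.cons false x : Fin (n+1) → Bool))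
      ∪ (cubeSlice A true).image (fun x : Fin n → Bool => (Fin.cons true x : Fin (n+1) → Bool)) := by
    ext z
    simp only [Finset.mem_union, Finset.mem_image]
    constructor
    · intro hz
      cases hb : z 0
      · exact Or.inl ⟨Fin.tail z, by simp [cubeSlice, hb ▸ Fin.cons_self_tail z, hz], by
          rw [← hb]; exact Fin.cons_self_tail z⟩
      · exact Or.inr ⟨Fin.tail z, by simp [cubeSlice, hb ▸ Fin.cons_self_tail z, hz], by
          rw [← hb]; exact Fin.cons_self_tail z⟩
    · rintro (⟨x, hx, rfl⟩ | ⟨x, hx, rfl⟩) <;> simpa [cubeSlice] using hx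
  have hinj : ∀ b : Bool, Function.Injective (fun x : Fin n → Bool => (Fin.cons b x : Fin (n+1) → Bool)) := by
    intro b x y h
    funext i
    have := congrFun h i.succ
    simpa using this
  have hdisj : Disjoint ((cubeSlice A false).image (fun x : Fin n → Bool => (Fin.cons false x : Fin (n+1) → Bool)))
      ((cubeSlice A true).image (fun x : Fin n → Bool => (Fin.cons true x : Fin (n+1) → Bool))) := by
    rw [Finset.disjoint_left]
    rintro z hz hz'
    simp only [Finset.mem_image] at hz hz'
    obtain ⟨x, -, rfl⟩ := hz
    obtain ⟨y, -, hy⟩ := hz'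
    have := congrFun hy 0
    simp at this
  conv_lhs => rw [h]
  rw [Finset.card_union_of_disjoint hdisj,
    Finset.card_image_of_injective _ (hinj false), Finset.card_image_of_injective _ (hinj true)]

lemma sum_cube_split {n : ℕ} (f : (Fin (n+1) → Bool) → ℝ) :
    ∑ z : Fin (n+1) → Bool, f z
      = (∑ x : Fin n → Bool, f (Fin.cons false x)) + ∑ x : Fin n → Bool, f (Fin.cons true x) := by
  rw [← (Fin.consEquiv (fun _ => Bool)).sum_comp f]
  rw [Fintype.sum_prod_type]
  simp [Fin.consEquiv, Fintype.sum_bool, add_comm]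

lemma ptwise (a X Y e : ℝ) (ha : 0 ≤ a) (he : e = 0 ∨ e = 1) (hX : 0 ≤ X) (hY : 0 ≤ Y) :
    X * Real.sqrt a + Y * e ≤ Real.sqrt (X^2 + Y^2) * Real.sqrt (a + e) := by
  have he0 : 0 ≤ e := by rcases he with rfl | rfl <;> norm_num
  rw [← Real.sqrt_mul (by positivity)]
  rw [show X * Real.sqrt a + Y * e = Real.sqrt ((X * Real.sqrt a + Y * e)^2) from
    (Real.sqrt_sq (by positivity)).symm]
  apply Real.sqrt_le_sqrt
  have hsq : Real.sqrt a ^ 2 = a := Real.sq_sqrt ha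
  rcases he with rfl | rfl
  · nlinarith [Real.sqrt_nonneg a]
  · nlinarith [sq_nonneg (X - Y * Real.sqrt a), Real.sqrt_nonneg a]

lemma polyineq (a0 a1 N : ℝ) (hN : 0 < N) :
    (Real.sqrt 2 * ((a0 + a1) * (2*N - (a0 + a1)) / (2*N)))^2
      ≤ (Real.sqrt 2 * ((a0*(N-a0) + a1*(N-a1)) / N))^2 + (a0 - a1)^2 := by
  have h2 : (Real.sqrt 2)^2 = 2 := Real.sq_sqrt (by norm_num)
  rw [mul_pow, mul_pow, h2]
  rw [div_pow, div_pow]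
  rw [← sub_nonneg]
  have id : 2 * ((a0 * (N - a0) + a1 * (N - a1)) ^ 2 / N ^ 2) + (a0 - a1) ^ 2
      - 2 * (((a0 + a1) * (2 * N - (a0 + a1))) ^ 2 / (2 * N) ^ 2)
      = ((a0 - a1)^2 * (N - a0 - a1)^2 + (a0 - a1)^4 / 2) / N^2 := by
    field_simp
    ring
  rw [id]
  positivity

theorem talagrand : ∀ (n : ℕ) (A : Finset (Fin n → Bool)),
    Real.sqrt 2 * ((A.card : ℝ) * (2^n - A.card) / 2^n)
      ≤ ∑ x : Fin n → Bool, Real.sqrt (hcount A x) := by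
  intro n
  induction n with
  | zero =>
    intro A
    have hcard : A.card ≤ 1 := by
      have := Finset.card_le_univ A
      simpa using this
    have h1 : (A.card : ℝ) * (2^0 - A.card) = 0 := by
      interval_cases h : A.card <;> norm_num
    rw [h1]
    simp only [mul_zero, zero_div, mul_zero]
    exact Finset.sum_nonneg fun x _ => Real.sqrt_nonneg _
  | succ n ih =>
    intro A
    classical
    set A0 := cubeSlice A false with hA0
    set A1 := cubeSlice A true with hA1
    set N : ℝ := 2^n with hNdef
    have hN : (0:ℝ) < N := by positivity
    set a0 : ℝ := (A0.card : ℝ) with ha0def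
    set a1 : ℝ := (A1.card : ℝ) with ha1def
    have ha0N : a0 ≤ N := by
      rw [ha0def, hNdef]
      have := Finset.card_le_univ A0
      calc (A0.card : ℝ) ≤ (Fintype.card (Fin n → Bool) : ℝ) := by exact_mod_cast this
        _ = 2^n := by simp
    have ha1N : a1 ≤ N := by
      rw [ha1def, hNdef]
      have := Finset.card_le_univ A1
      calc (A1.card : ℝ) ≤ (Fintype.card (Fin n → Bool) : ℝ) := by exact_mod_cast this
        _ = 2^n := by simp
    have ha0 : 0 ≤ a0 := by positivity
    have ha1 : 0 ≤ a1 := by positivity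
    set X : ℝ := Real.sqrt 2 * ((a0*(N-a0) + a1*(N-a1)) / N) with hXdef
    set Y : ℝ := |a0 - a1| with hYdef
    have hX : 0 ≤ X := by
      apply mul_nonneg (Real.sqrt_nonneg _)
      apply div_nonneg _ hN.le
      have := mul_nonneg ha0 (sub_nonneg.2 ha0N)
      have := mul_nonneg ha1 (sub_nonneg.2 ha1N)
      linarith
    have hY : 0 ≤ Y := abs_nonneg _
    set R : ℝ := Real.sqrt (X^2 + Y^2) with hRdef
    -- sum splitting
    have hsplit := sum_cube_split (fun z => Real.sqrt (hcount A z))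
    -- pointwise bounds summed, for each b
    have key : ∀ b : Bool,
        X * (∑ x : Fin n → Bool, Real.sqrt (hcount (cubeSlice A b) x))
          + Y * ((cubeSlice A b \ cubeSlice A (!b)).card : ℝ)
          ≤ R * ∑ x : Fin n → Bool, Real.sqrt (hcount A (Fin.cons b x)) := by
      intro b
      have hcardsum : ((cubeSlice A b \ cubeSlice A (!b)).card : ℝ)
          = ∑ x : Fin n → Bool, (if x ∈ cubeSlice A b ∧ x ∉ cubeSlice A (!b) then (1:ℝ) else 0) := by
        rw [Finset.sum_boole]
        congr 1
        congr 1
        ext x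
        simp [Finset.mem_sdiff]
      rw [hcardsum, Finset.mul_sum, Finset.mul_sum, Finset.mul_sum, ← Finset.sum_add_distrib]
      apply Finset.sum_le_sum
      intro x _
      have hc := hcount_cons A b x
      have hcast : (hcount A (Fin.cons b x) : ℝ)
          = (hcount (cubeSlice A b) x : ℝ)
            + (if x ∈ cubeSlice A b ∧ x ∉ cubeSlice A (!b) then (1:ℝ) else 0) := by
        rw [hc]
        push_cast [apply_ite (Nat.cast : ℕ → ℝ)]
        ring
      rw [hcast]
      exact ptwise _ X Y _ (Nat.cast_nonneg _) (by split <;> simp) hX hY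
    -- combine
    have hF0 := ih A0
    have hF1 := ih A1
    have hdelta : Y ≤ ((A0 \ A1).card : ℝ) + ((A1 \ A0).card : ℝ) := by
      have h01 : A0.card ≤ (A0 \ A1).card + A1.card := by
        calc A0.card ≤ ((A0 \ A1) ∪ A1).card :=
              Finset.card_le_card (fun x hx => by
                by_cases h : x ∈ A1 <;> simp [Finset.mem_union, Finset.mem_sdiff, hx, h])
          _ ≤ (A0 \ A1).card + A1.card := Finset.card_union_le _ _
      have h10 : A1.card ≤ (A1 \ A0).card + A0.card := by
        calc A1.card ≤ ((A1 \ A0) ∪ A0).card :=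
              Finset.card_le_card (fun x hx => by
                by_cases h : x ∈ A0 <;> simp [Finset.mem_union, Finset.mem_sdiff, hx, h])
          _ ≤ (A1 \ A0).card + A0.card := Finset.card_union_le _ _
      rw [hYdef]
      rw [abs_le]
      constructor
      · have := (Nat.cast_le (α := ℝ)).2 h10
        push_cast at this ⊢
        linarith
      · have := (Nat.cast_le (α := ℝ)).2 h01
        push_cast at this ⊢
        linarith
    have hsum2 : X * X + Y * Y ≤ R * ∑ z : Fin (n+1) → Bool, Real.sqrt (hcount A z) := by
      rw [hsplit, mul_add]
      have k0 := key false
      have k1 := key true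
      simp only [Bool.not_false, Bool.not_true] at k0 k1
      have hXle : X ≤ (∑ x : Fin n → Bool, Real.sqrt (hcount A0 x))
          + (∑ x : Fin n → Bool, Real.sqrt (hcount A1 x)) := by
        rw [hXdef]
        have : Real.sqrt 2 * ((a0*(N-a0) + a1*(N-a1)) / N)
            = Real.sqrt 2 * (a0 * (N - a0) / N) + Real.sqrt 2 * (a1 * (N - a1) / N) := by ring
        rw [this]
        exact add_le_add hF0 hF1
      have h1 : X * X ≤ X * ((∑ x : Fin n → Bool, Real.sqrt (hcount A0 x))
          + (∑ x : Fin n → Bool, Real.sqrt (hcount A1 x))) :=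
        mul_le_mul_of_nonneg_left hXle hX
      have h2 : Y * Y ≤ Y * (((A0 \ A1).card : ℝ) + ((A1 \ A0).card : ℝ)) :=
        mul_le_mul_of_nonneg_left hdelta hY
      rw [mul_add] at h1 h2
      linarith [k0, k1]
    -- conclude
    set F : ℝ := ∑ z : Fin (n+1) → Bool, Real.sqrt (hcount A z) with hFdef
    have hFnn : 0 ≤ F := Finset.sum_nonneg fun x _ => Real.sqrt_nonneg _
    have hxy : (0:ℝ) ≤ X^2 + Y^2 := add_nonneg (sq_nonneg X) (sq_nonneg Y)
    have hRF : R ≤ F := by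
      rcases eq_or_lt_of_le (Real.sqrt_nonneg (X^2+Y^2)) with h | h
      · rw [hRdef, ← h]; exact hFnn
      · have hR2 : R * R = X * X + Y * Y := by
          rw [hRdef, Real.mul_self_sqrt hxy]; ring
        have : R * R ≤ R * F := by rw [hR2]; exact hsum2
        exact le_of_mul_le_mul_left this h
    have hZR : Real.sqrt 2 * ((A.card : ℝ) * (2^(n+1) - A.card) / 2^(n+1)) ≤ R := by
      have hacard : (A.card : ℝ) = a0 + a1 := by
        rw [card_eq_cubeSlices A]
        push_cast
        rfl
      have h2N : (2:ℝ)^(n+1) = 2 * N := by rw [hNdef]; ring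
      rw [hacard, h2N]
      have hZnn : 0 ≤ Real.sqrt 2 * ((a0 + a1) * (2*N - (a0 + a1)) / (2*N)) := by
        apply mul_nonneg (Real.sqrt_nonneg _)
        apply div_nonneg _ (by positivity)
        apply mul_nonneg (by linarith)
        linarith
      rw [hRdef]
      refine (Real.le_sqrt hZnn hxy).2 ?_
      calc (Real.sqrt 2 * ((a0 + a1) * (2*N - (a0 + a1)) / (2*N)))^2
          ≤ (Real.sqrt 2 * ((a0*(N-a0) + a1*(N-a1)) / N))^2 + (a0 - a1)^2 := polyineq a0 a1 N hN
        _ = X^2 + Y^2 := by rw [hXdef, hYdef, sq_abs]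
    exact le_trans hZR hRF

/-! ### The vertex-boundary corollary -/

lemma mem_cubeNbhd {n : ℕ} {S : Finset (Fin n → Bool)} {v : Fin n → Bool} :
    v ∈ cubeNbhd S ↔ ∃ u ∈ S, hammingDist u v = 1 := by
  simp only [cubeNbhd, Finset.mem_biUnion, SimpleGraph.mem_neighborFinset]
  rfl

lemma outer_boundary {n : ℕ} (hn : 1 ≤ n) (S : Finset (Fin n → Bool))
    (hS : S.card ≤ 2^(n-1)) :
    (S.card : ℝ) / (2 * Real.sqrt (n+1)) ≤ ((cubeNbhd S \ S).card : ℝ) := by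
  classical
  set D := cubeNbhd S \ S with hD
  have hle : S.card ≤ 2^n := by
    have := Finset.card_le_univ S
    simpa using this
  have hcompl : ((Sᶜ : Finset (Fin n → Bool)).card : ℝ) = 2^n - S.card := by
    rw [Finset.card_compl]
    have h2 : Fintype.card (Fin n → Bool) = 2^n := by simp
    rw [h2, Nat.cast_sub hle]
    push_cast
    ring
  have htal := talagrand n Sᶜ
  rw [hcompl] at htal
  have hzero : ∀ x : Fin n → Bool, x ∉ D → hcount Sᶜ x = 0 := by
    intro x hx
    unfold hcount
    split
    · rename_i hxc
      rw [Finset.card_eq_zero]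
      rw [Finset.filter_eq_empty_iff]
      intro i _
      simp only [not_not]
      by_contra hni
      have hfS : flipBit i x ∈ S := by
        simpa using hni
      have hxN : x ∈ cubeNbhd S :=
        mem_cubeNbhd.2 ⟨flipBit i x, hfS, hammingDist_flipBit i x⟩
      have hxS : x ∉ S := by simpa using hxc
      exact hx (Finset.mem_sdiff.2 ⟨hxN, hxS⟩)
    · rfl
  have hupper : ∑ x : Fin n → Bool, Real.sqrt (hcount Sᶜ x) ≤ (D.card : ℝ) * Real.sqrt n := by
    calc ∑ x : Fin n → Bool, Real.sqrt (hcount Sᶜ x)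
        ≤ ∑ x : Fin n → Bool, (if x ∈ D then Real.sqrt n else 0) := by
          apply Finset.sum_le_sum
          intro x _
          by_cases hx : x ∈ D
          · rw [if_pos hx]
            exact Real.sqrt_le_sqrt (by exact_mod_cast hcount_le Sᶜ x)
          · rw [if_neg hx, hzero x hx]
            simp
      _ = (D.card : ℝ) * Real.sqrt n := by
          rw [Finset.sum_ite_mem, Finset.univ_inter, Finset.sum_const, nsmul_eq_mul]
  -- lower bound for the Talagrand quantity
  have hhalf : (2:ℝ)^(n-1) = 2^n / 2 := by
    have h : (2:ℝ)^n = 2^(n-1) * 2 := by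
      rw [← pow_succ]
      congr 1
      omega
    rw [h]
    ring
  have hSle : (S.card : ℝ) ≤ 2^n / 2 := by
    rw [← hhalf]
    exact_mod_cast hS
  have hlow : (S.card : ℝ) / Real.sqrt 2 ≤ Real.sqrt 2 * ((2^n - S.card) * (2^n - (2^n - S.card)) / 2^n) := by
    have hs2 : Real.sqrt 2 * Real.sqrt 2 = 2 := Real.mul_self_sqrt (by norm_num)
    have hsnn : (0:ℝ) < Real.sqrt 2 := Real.sqrt_pos.2 (by norm_num)
    rw [div_le_iff₀ hsnn]
    have hsimp : (2:ℝ)^n - ((2:ℝ)^n - S.card) = S.card := by ring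
    rw [hsimp]
    have hNpos : (0:ℝ) < 2^n := by positivity
    rw [show Real.sqrt 2 * ((2^n - (S.card:ℝ)) * S.card / 2^n) * Real.sqrt 2
        = 2 * ((2^n - (S.card:ℝ)) * S.card / 2^n) by
      rw [mul_right_comm, hs2]]
    rw [show (2:ℝ) * ((2^n - (S.card:ℝ)) * S.card / 2^n)
        = 2 * ((2^n - (S.card:ℝ)) * S.card) / 2^n by ring]
    rw [le_div_iff₀ hNpos]
    nlinarith [Nat.cast_nonneg (α := ℝ) S.card]
  have hcombined : (S.card : ℝ) / Real.sqrt 2 ≤ (D.card : ℝ) * Real.sqrt n := by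
    calc (S.card : ℝ) / Real.sqrt 2 ≤ _ := hlow
      _ ≤ ∑ x : Fin n → Bool, Real.sqrt (hcount Sᶜ x) := htal
      _ ≤ (D.card : ℝ) * Real.sqrt n := hupper
  -- conclude
  have hsn : (0:ℝ) < Real.sqrt n := Real.sqrt_pos.2 (by exact_mod_cast Nat.pos_of_ne_zero (by omega))
  have hs2pos : (0:ℝ) < Real.sqrt 2 := Real.sqrt_pos.2 (by norm_num)
  have h1 : (S.card : ℝ) / (Real.sqrt 2 * Real.sqrt n) ≤ (D.card : ℝ) := by
    rw [div_le_iff₀ (by positivity)]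
    rw [div_le_iff₀ hs2pos] at hcombined
    calc (S.card : ℝ) ≤ (D.card : ℝ) * Real.sqrt n * Real.sqrt 2 := hcombined
      _ = (D.card : ℝ) * (Real.sqrt 2 * Real.sqrt n) := by ring
  refine le_trans ?_ h1
  apply div_le_div_of_nonneg_left (Nat.cast_nonneg _) (by positivity)
  have h2n : Real.sqrt 2 * Real.sqrt n = Real.sqrt (2 * n) := (Real.sqrt_mul (by norm_num) _).symm
  have h4 : (2:ℝ) * Real.sqrt (n+1) = Real.sqrt (4 * (n+1)) := by
    rw [show (4:ℝ) * (n+1) = 2^2 * (n+1) by ring, Real.sqrt_mul (by positivity)]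
    congr 1
    rw [Real.sqrt_sq (by norm_num)]
  rw [h2n, h4]
  apply Real.sqrt_le_sqrt
  have : (0:ℝ) ≤ (n:ℝ) := Nat.cast_nonneg n
  linarith

/-! ### Reduction: snoc and parity lemmas -/

lemma hammingDist_snoc {n : ℕ} (x y : Fin n → Bool) (b c : Bool) :
    hammingDist (Fin.snoc x b : Fin (n+1) → Bool) (Fin.snoc y c)
      = hammingDist x y + (if b = c then 0 else 1) := by
  unfold hammingDist
  simp only [Finset.card_filter]
  rw [Fin.sum_univ_castSucc]
  simp only [Fin.snoc_castSucc, Fin.snoc_last]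
  congr 1
  by_cases h : b = c <;> simp [h]

lemma const_false_snoc {n : ℕ} :
    (fun _ => false : Fin (n+1) → Bool) = Fin.snoc (fun _ => false) false := by
  funext i
  refine Fin.lastCases ?_ ?_ i
  · simp
  · intro j; simp

lemma hammingWeight_snoc {n : ℕ} (x : Fin n → Bool) (b : Bool) :
    hammingWeight (Fin.snoc x b : Fin (n+1) → Bool)
      = hammingWeight x + (if b then 1 else 0) := by
  unfold hammingWeight
  rw [const_false_snoc, hammingDist_snoc]
  cases b <;> simp

lemma parity_dist {n : ℕ} (x y : Fin n → Bool) :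
    Even (hammingWeight x + hammingWeight y + hammingDist x y) := by
  unfold hammingWeight hammingDist
  simp only [Finset.card_filter]
  rw [← Finset.sum_add_distrib, ← Finset.sum_add_distrib]
  apply Finset.even_sum
  intro i _
  cases hx : x i <;> cases hy : y i <;> simp [hx, hy]

def parityBit {n : ℕ} (x : Fin n → Bool) : Bool := decide (Odd (hammingWeight x))

/-! ### Main theorem -/

/-- For `d` sufficiently large, any subset `A` of the even side of `Q_d` with
`|A| ≤ 2^{d−2}` satisfies `|N(A)| ≥ (1 + 1/(2√d))·|A|`. -/
theorem stmt_11 :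
    ∃ d₀ : ℕ, ∀ d : ℕ, d₀ ≤ d → ∀ A : Finset (Fin d → Bool),
      (∀ u ∈ A, Even (hammingWeight u)) → A.card ≤ 2 ^ (d - 2) →
      (1 + 1 / (2 * Real.sqrt d)) * A.card ≤ ((cubeNbhd A).card : ℝ) := by
  classical
  refine ⟨2, fun d hd A hA hcard => ?_⟩
  obtain ⟨n, rfl⟩ : ∃ n, d = n + 1 := ⟨d - 1, by omega⟩
  have hn : 1 ≤ n := by omega
  -- the projected set
  set S : Finset (Fin n → Bool) := A.image Fin.init with hSdef
  -- each element of A is snoc of its init with its parity bit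
  have hrecon : ∀ u ∈ A, u = Fin.snoc (Fin.init u) (parityBit (Fin.init u)) := by
    intro u hu
    have hw : hammingWeight u = hammingWeight (Fin.init u) + (if u (Fin.last n) then 1 else 0) := by
      conv_lhs => rw [← Fin.snoc_init_self u]
      rw [hammingWeight_snoc]
    have heven := hA u hu
    have hbit : u (Fin.last n) = parityBit (Fin.init u) := by
      unfold parityBit
      cases hb : u (Fin.last n)
      · rw [hb] at hw
        simp only [if_neg Bool.false_ne_true] at hw
        have : Even (hammingWeight (Fin.init u)) := by
          rw [hw] at heven; simpa using heven
        simp [Nat.not_odd_iff_even.2 this]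
      · rw [hb] at hw
        simp only [if_pos] at hw
        have : Odd (hammingWeight (Fin.init u)) := by
          rw [hw] at heven
          rcases Nat.even_or_odd (hammingWeight (Fin.init u)) with h | h
          · exfalso
            rw [Nat.even_add_one] at heven
            exact heven (by simpa using h)
          · exact h
        simp [this]
    conv_lhs => rw [← Fin.snoc_init_self u]
    rw [hbit]
  have hScard : S.card = A.card := by
    rw [hSdef]
    apply Finset.card_image_of_injOn
    intro u hu v hv huv
    rw [hrecon u hu, hrecon v hv, huv]
  -- the injection ψ into the odd side
  set ψ : (Fin n → Bool) → (Fin (n+1) → Bool) := fun x => Fin.snoc x (!(parityBit x)) with hψdef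
  have hψinj : Function.Injective ψ := by
    intro x y h
    have := congrArg Fin.init h
    rwa [hψdef, Fin.init_snoc, Fin.init_snoc] at this
  -- ψ maps S ∪ (cubeNbhd S \ S) into cubeNbhd A
  have hmap : ∀ y ∈ S ∪ (cubeNbhd S \ S), ψ y ∈ cubeNbhd A := by
    intro y hy
    rcases Finset.mem_union.1 hy with hyS | hyD
    · obtain ⟨u, hu, hinit⟩ := Finset.mem_image.1 (hSdef ▸ hyS)
      refine mem_cubeNbhd.2 ⟨u, hu, ?_⟩
      rw [hrecon u hu, hinit, hψdef]
      rw [hammingDist_snoc]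
      simp [hammingDist_self]
    · obtain ⟨s, hsS, hdist⟩ := mem_cubeNbhd.1 (Finset.mem_sdiff.1 hyD).1
      obtain ⟨u, hu, hinit⟩ := Finset.mem_image.1 (hSdef ▸ hsS)
      refine mem_cubeNbhd.2 ⟨u, hu, ?_⟩
      rw [hrecon u hu, hinit, hψdef, hammingDist_snoc, hdist]
      have hpar : parityBit s = !(parityBit y) := by
        have hpd := parity_dist s y
        rw [hdist] at hpd
        unfold parityBit
        rcases Nat.even_or_odd (hammingWeight s) with h1 | h1 <;>
          rcases Nat.even_or_odd (hammingWeight y) with h2 | h2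
        · exfalso
          rw [Nat.even_iff] at hpd h1 h2
          omega
        · simp [Nat.not_odd_iff_even.2 h1, h2]
        · simp [h1, Nat.not_odd_iff_even.2 h2]
        · exfalso
          rw [Nat.even_iff] at hpd
          rw [Nat.odd_iff] at h1 h2
          omega
      rw [hpar]
      simp
  -- counting
  have hTcard : (S ∪ (cubeNbhd S \ S)).card = S.card + (cubeNbhd S \ S).card := by
    apply Finset.card_union_of_disjoint
    exact Finset.disjoint_sdiff
  have hNcard : S.card + (cubeNbhd S \ S).card ≤ (cubeNbhd A).card := by
    rw [← hTcard]
    calc (S ∪ (cubeNbhd S \ S)).card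
        = ((S ∪ (cubeNbhd S \ S)).image ψ).card :=
          (Finset.card_image_of_injective _ hψinj).symm
      _ ≤ (cubeNbhd A).card := by
          apply Finset.card_le_card
          intro z hz
          obtain ⟨y, hy, rfl⟩ := Finset.mem_image.1 hz
          exact hmap y hy
  -- numeric conclusion
  have hS2 : S.card ≤ 2^(n-1) := by
    rw [hScard]
    have : n + 1 - 2 = n - 1 := by omega
    rwa [this] at hcard
  have hbound := outer_boundary hn S hS2
  have hcast : ((n:ℝ) + 1) = ((n+1 : ℕ) : ℝ) := by push_cast; ring
  have hfinal : (1 + 1 / (2 * Real.sqrt ((n+1 : ℕ) : ℝ))) * (A.card : ℝ)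
      ≤ ((cubeNbhd A).card : ℝ) := by
    have hNr : (S.card : ℝ) + ((cubeNbhd S \ S).card : ℝ) ≤ ((cubeNbhd A).card : ℝ) := by
      exact_mod_cast hNcard
    have hAS : (S.card : ℝ) = (A.card : ℝ) := by exact_mod_cast hScard
    rw [← hcast]
    have hsqrtpos : (0:ℝ) < Real.sqrt ((n:ℝ)+1) := Real.sqrt_pos.2 (by positivity)
    have hexp : (1 + 1 / (2 * Real.sqrt ((n:ℝ)+1))) * (A.card : ℝ)
        = (A.card : ℝ) + (A.card : ℝ) / (2 * Real.sqrt ((n:ℝ)+1)) := by ring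
    rw [hexp]
    rw [hcast] at hbound
    rw [hAS] at hbound
    rw [← hcast] at hbound
    linarith [hbound, hNr, hAS]
  exact_mod_cast hfinal
end
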